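/- Let A_n ∈ R^{m_n×r_n} satisfy A_nᵀA_n = I for all n, and define h(X) = ½‖P_{Ω^c}(X)‖_F² − ½‖P_{Ω^c}(X) ×_1 A_1ᵀ … ×_N A_Nᵀ + P_Ω(M) ×_1 A_1ᵀ … ×_N A_Nᵀ‖_F² for tensors X ∈ R^{m_1×…×m_N}. Then h is convex in X, and its gradient is 1-Lipschitz: ‖∇h(X) − ∇h(Y)‖_F ≤ ‖X − Y‖_F for all X, Y. -/

import Mathlib

open Matrix

/-- The multilinear (Tucker) product `C ×₁ A 1 ×₂ ⋯ ×_N A N` of a core tensor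
`C ∈ ℝ^{r 1 × ⋯ × r N}` with matrices `A n ∈ ℝ^{m n × r n}`, where a tensor is
represented as a function on the product of its index sets. -/
def tucker {N : ℕ} {m r : Fin N → ℕ}
    (A : ∀ n, Matrix (Fin (m n)) (Fin (r n)) ℝ)
    (C : (∀ n, Fin (r n)) → ℝ) : (∀ n, Fin (m n)) → ℝ :=
  fun i => ∑ j : ∀ n, Fin (r n), (∏ n, A n (i n) (j n)) * C j

/-- Squared Frobenius norm of a tensor. -/
def tnorm2 {ι : Type*} [Fintype ι] (X : ι → ℝ) : ℝ := ∑ i, (X i) ^ 2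


/-- The objective `h(X) = ½‖P_{Ωᶜ}(X)‖_F² − ½‖P_{Ωᶜ}(X) ×ᵢ Aᵢᵀ + P_Ω(M) ×ᵢ Aᵢᵀ‖_F²`,
viewed as a function on the Euclidean (tensor) space. -/
noncomputable def hfun {N : ℕ} {m r : Fin N → ℕ}
    (A : ∀ n, Matrix (Fin (m n)) (Fin (r n)) ℝ)
    (Ω : Set (∀ n, Fin (m n))) [DecidablePred (· ∈ Ω)]
    (M : (∀ n, Fin (m n)) → ℝ)
    (X : EuclideanSpace ℝ (∀ n, Fin (m n))) : ℝ :=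
  (1 / 2) * tnorm2 (fun i => if i ∈ Ω then (0 : ℝ) else X i) -
    (1 / 2) * tnorm2 (fun j : ∀ n, Fin (r n) =>
      tucker (fun n => (A n)ᵀ) (fun i => if i ∈ Ω then (0 : ℝ) else X i) j +
        tucker (fun n => (A n)ᵀ) (fun i => if i ∈ Ω then M i else 0) j)

section Aux

variable {N : ℕ} {m r : Fin N → ℕ}


noncomputable def Pmap (Ω : Set (∀ n, Fin (m n))) [DecidablePred (· ∈ Ω)] :
    EuclideanSpace ℝ (∀ n, Fin (m n)) →L[ℝ] EuclideanSpace ℝ (∀ n, Fin (m n)) :=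
  LinearMap.toContinuousLinearMap
    { toFun := fun x => WithLp.toLp 2 (fun i => if i ∈ Ω then 0 else x i)
      map_add' := by
        intro x y
        ext i
        by_cases h : i ∈ Ω <;> simp [h, PiLp.add_apply]
      map_smul' := by
        intro c x
        ext i
        by_cases h : i ∈ Ω <;> simp [h, PiLp.smul_apply] }

noncomputable def Tmap (A : ∀ n, Matrix (Fin (m n)) (Fin (r n)) ℝ) :
    EuclideanSpace ℝ (∀ n, Fin (m n)) →L[ℝ] EuclideanSpace ℝ (∀ n, Fin (r n)) :=
  LinearMap.toContinuousLinearMap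
    { toFun := fun x => WithLp.toLp 2 (fun j => ∑ i, (∏ n, A n (i n) (j n)) * x i)
      map_add' := by
        intro x y
        ext j
        simp [PiLp.add_apply, mul_add, Finset.sum_add_distrib]
      map_smul' := by
        intro c x
        ext j
        simp only [PiLp.toLp_apply, PiLp.smul_apply, smul_eq_mul, RingHom.id_apply, Finset.mul_sum]
        exact Finset.sum_congr rfl fun i _ => by ring }

noncomputable def Ttmap (A : ∀ n, Matrix (Fin (m n)) (Fin (r n)) ℝ) :
    EuclideanSpace ℝ (∀ n, Fin (r n)) →L[ℝ] EuclideanSpace ℝ (∀ n, Fin (m n)) :=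
  LinearMap.toContinuousLinearMap
    { toFun := fun y => WithLp.toLp 2 (fun i => ∑ j, (∏ n, A n (i n) (j n)) * y j)
      map_add' := by
        intro x y
        ext i
        simp [PiLp.add_apply, mul_add, Finset.sum_add_distrib]
      map_smul' := by
        intro c x
        ext i
        simp only [PiLp.toLp_apply, PiLp.smul_apply, smul_eq_mul, RingHom.id_apply, Finset.mul_sum]
        exact Finset.sum_congr rfl fun j _ => by ring }

@[simp] lemma Pmap_apply (Ω : Set (∀ n, Fin (m n))) [DecidablePred (· ∈ Ω)]
    (x : EuclideanSpace ℝ (∀ n, Fin (m n))) (i) :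
    Pmap Ω x i = if i ∈ Ω then 0 else x i := rfl

@[simp] lemma Tmap_apply (A : ∀ n, Matrix (Fin (m n)) (Fin (r n)) ℝ)
    (x : EuclideanSpace ℝ (∀ n, Fin (m n))) (j) :
    Tmap A x j = ∑ i, (∏ n, A n (i n) (j n)) * x i := rfl

@[simp] lemma Ttmap_apply (A : ∀ n, Matrix (Fin (m n)) (Fin (r n)) ℝ)
    (y : EuclideanSpace ℝ (∀ n, Fin (r n))) (i) :
    Ttmap A y i = ∑ j, (∏ n, A n (i n) (j n)) * y j := rfl

lemma einner_eq {ι : Type*} [Fintype ι] (x y : EuclideanSpace ℝ ι) :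
    (inner ℝ x y : ℝ) = ∑ i, x i * y i := by
  simp [PiLp.inner_apply, RCLike.inner_apply, conj_trivial, mul_comm]

lemma adjP (Ω : Set (∀ n, Fin (m n))) [DecidablePred (· ∈ Ω)]
    (x y : EuclideanSpace ℝ (∀ n, Fin (m n))) :
    (inner ℝ (Pmap Ω x) y : ℝ) = inner ℝ x (Pmap Ω y) := by
  simp only [einner_eq, Pmap_apply]
  exact Finset.sum_congr rfl fun i _ => by by_cases h : i ∈ Ω <;> simp [h]

lemma Pidem (Ω : Set (∀ n, Fin (m n))) [DecidablePred (· ∈ Ω)]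
    (x : EuclideanSpace ℝ (∀ n, Fin (m n))) : Pmap Ω (Pmap Ω x) = Pmap Ω x := by
  ext i
  by_cases h : i ∈ Ω <;> simp [h]

lemma Pnorm (Ω : Set (∀ n, Fin (m n))) [DecidablePred (· ∈ Ω)]
    (x : EuclideanSpace ℝ (∀ n, Fin (m n))) : ‖Pmap Ω x‖ ≤ ‖x‖ := by
  rw [EuclideanSpace.norm_eq, EuclideanSpace.norm_eq]
  apply Real.sqrt_le_sqrt
  apply Finset.sum_le_sum
  intro i _
  by_cases h : i ∈ Ω <;> simp [h] <;> positivity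

lemma adjT (A : ∀ n, Matrix (Fin (m n)) (Fin (r n)) ℝ)
    (x : EuclideanSpace ℝ (∀ n, Fin (m n))) (y : EuclideanSpace ℝ (∀ n, Fin (r n))) :
    (inner ℝ (Tmap A x) y : ℝ) = inner ℝ x (Ttmap A y) := by
  simp only [einner_eq, Tmap_apply, Ttmap_apply, Finset.sum_mul, Finset.mul_sum]
  rw [Finset.sum_comm]
  exact Finset.sum_congr rfl fun i _ => Finset.sum_congr rfl fun j _ => by ring

lemma TTt (A : ∀ n, Matrix (Fin (m n)) (Fin (r n)) ℝ)
    (hA : ∀ n, (A n)ᵀ * A n = 1) (y : EuclideanSpace ℝ (∀ n, Fin (r n))) :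
    Tmap A (Ttmap A y) = y := by
  have key : ∀ j j' : ∀ n, Fin (r n),
      ∑ i : ∀ n, Fin (m n), ∏ n, A n (i n) (j n) * A n (i n) (j' n)
        = if j = j' then 1 else 0 := by
    intro j j'
    rw [← Fintype.prod_sum (fun n x => A n x (j n) * A n x (j' n))]
    have : ∀ n, ∑ x, A n x (j n) * A n x (j' n) = ((A n)ᵀ * A n) (j n) (j' n) := by
      intro n
      simp [Matrix.mul_apply, transpose_apply]
    simp only [this, hA]
    by_cases h : j = j'
    · subst h; simp [Matrix.one_apply]
    · have : ∃ n, j n ≠ j' n := by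
        by_contra hc
        push_neg at hc
        exact h (funext hc)
      obtain ⟨n, hn⟩ := this
      rw [if_neg h]
      exact Finset.prod_eq_zero (Finset.mem_univ n) (by simp [Matrix.one_apply, hn])
  ext j
  simp only [Tmap_apply, Ttmap_apply]
  have : ∀ i : ∀ n, Fin (m n), (∏ n, A n (i n) (j n)) * (∑ j', (∏ n, A n (i n) (j' n)) * y j')
      = ∑ j', (∏ n, A n (i n) (j n) * A n (i n) (j' n)) * y j' := by
    intro i
    rw [Finset.mul_sum]
    exact Finset.sum_congr rfl fun j' _ => by rw [Finset.prod_mul_distrib]; ring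
  simp only [this]
  rw [Finset.sum_comm]
  simp only [← Finset.sum_mul, key]
  simp

noncomputable def Smap (A : ∀ n, Matrix (Fin (m n)) (Fin (r n)) ℝ)
    (Ω : Set (∀ n, Fin (m n))) [DecidablePred (· ∈ Ω)] :
    EuclideanSpace ℝ (∀ n, Fin (m n)) →L[ℝ] EuclideanSpace ℝ (∀ n, Fin (m n)) :=
  Pmap Ω - (Pmap Ω).comp ((Ttmap A).comp ((Tmap A).comp (Pmap Ω)))

noncomputable def cvec (A : ∀ n, Matrix (Fin (m n)) (Fin (r n)) ℝ)
    (Ω : Set (∀ n, Fin (m n))) [DecidablePred (· ∈ Ω)]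
    (M : (∀ n, Fin (m n)) → ℝ) : EuclideanSpace ℝ (∀ n, Fin (r n)) :=
  Tmap A (WithLp.toLp 2 fun i => if i ∈ Ω then M i else 0)

noncomputable def bvec (A : ∀ n, Matrix (Fin (m n)) (Fin (r n)) ℝ)
    (Ω : Set (∀ n, Fin (m n))) [DecidablePred (· ∈ Ω)]
    (M : (∀ n, Fin (m n)) → ℝ) : EuclideanSpace ℝ (∀ n, Fin (m n)) :=
  Pmap Ω (Ttmap A (cvec A Ω M))

lemma Smap_apply (A : ∀ n, Matrix (Fin (m n)) (Fin (r n)) ℝ)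
    (Ω : Set (∀ n, Fin (m n))) [DecidablePred (· ∈ Ω)]
    (x : EuclideanSpace ℝ (∀ n, Fin (m n))) :
    Smap A Ω x = Pmap Ω x - Pmap Ω (Ttmap A (Tmap A (Pmap Ω x))) := by
  simp [Smap]

lemma tucker_Tmap (A : ∀ n, Matrix (Fin (m n)) (Fin (r n)) ℝ)
    (C : (∀ n, Fin (m n)) → ℝ) (j : ∀ n, Fin (r n)) :
    tucker (fun n => (A n)ᵀ) C j = Tmap A (WithLp.toLp 2 C) j := rfl

lemma tnorm2_inner {ι : Type*} [Fintype ι] (X : EuclideanSpace ℝ ι) :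
    tnorm2 X.ofLp = inner ℝ X X := by
  simp only [tnorm2, einner_eq, sq]

-- quadratic representation
lemma hrep (A : ∀ n, Matrix (Fin (m n)) (Fin (r n)) ℝ)
    (Ω : Set (∀ n, Fin (m n))) [DecidablePred (· ∈ Ω)]
    (M : (∀ n, Fin (m n)) → ℝ) (X : EuclideanSpace ℝ (∀ n, Fin (m n))) :
    hfun A Ω M X = 1 / 2 * inner ℝ X (Smap A Ω X) - inner ℝ (bvec A Ω M) X
      - 1 / 2 * (inner ℝ (cvec A Ω M) (cvec A Ω M) : ℝ) := by
  set z := Pmap Ω X with hz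
  set c := cvec A Ω M with hc
  have hz' : (fun i => if i ∈ Ω then (0 : ℝ) else X i) = z.ofLp := rfl
  have e1 : hfun A Ω M X
      = 1 / 2 * inner ℝ z z - 1 / 2 * (inner ℝ (Tmap A z + c) (Tmap A z + c) : ℝ) := by
    have harg : (fun j : ∀ n, Fin (r n) =>
        tucker (fun n => (A n)ᵀ) (fun i => if i ∈ Ω then (0 : ℝ) else X i) j +
          tucker (fun n => (A n)ᵀ) (fun i => if i ∈ Ω then M i else 0) j)
        = fun j => (Tmap A z + c) j := by
      funext j
      simp only [tucker_Tmap, hz', WithLp.toLp_ofLp, PiLp.add_apply, hc, cvec]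
    rw [hfun, harg, hz']
    rw [tnorm2_inner z, tnorm2_inner (Tmap A z + c)]
  rw [e1, real_inner_add_add_self]
  have h1 : (inner ℝ (Tmap A z) (Tmap A z) : ℝ) = inner ℝ X (Pmap Ω (Ttmap A (Tmap A z))) := by
    rw [adjT, hz, adjP]
  have h2 : (inner ℝ (Tmap A z) c : ℝ) = inner ℝ (bvec A Ω M) X := by
    rw [adjT, hz, adjP, real_inner_comm]
    rfl
  have h3 : (inner ℝ z z : ℝ) = inner ℝ X (Pmap Ω X) := by
    rw [hz, adjP, Pidem]
  have h4 : (inner ℝ X (Smap A Ω X) : ℝ)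
      = inner ℝ X (Pmap Ω X) - inner ℝ X (Pmap Ω (Ttmap A (Tmap A z))) := by
    rw [Smap_apply, inner_sub_right, hz]
  rw [h1, h2, h3, h4]
  ring

variable (A : ∀ n, Matrix (Fin (m n)) (Fin (r n)) ℝ)
    (Ω : Set (∀ n, Fin (m n))) [DecidablePred (· ∈ Ω)]

lemma selfadjS (x y : EuclideanSpace ℝ (∀ n, Fin (m n))) :
    (inner ℝ (Smap A Ω x) y : ℝ) = inner ℝ x (Smap A Ω y) := by
  rw [Smap_apply, Smap_apply, inner_sub_left, inner_sub_right, adjP]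
  congr 1
  rw [adjP, real_inner_comm, ← adjT, real_inner_comm, adjT, adjP]

lemma Su_eq (x : EuclideanSpace ℝ (∀ n, Fin (m n))) :
    Smap A Ω x = Pmap Ω (Pmap Ω x - Ttmap A (Tmap A (Pmap Ω x))) := by
  rw [Smap_apply, map_sub, Pidem]

lemma inner_z_sub_Q (hA : ∀ n, (A n)ᵀ * A n = 1)
    (z : EuclideanSpace ℝ (∀ n, Fin (m n))) :
    (inner ℝ z (z - Ttmap A (Tmap A z)) : ℝ)
      = inner ℝ (z - Ttmap A (Tmap A z)) (z - Ttmap A (Tmap A z)) := by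
  have hq : (inner ℝ (Ttmap A (Tmap A z)) (Ttmap A (Tmap A z)) : ℝ)
      = inner ℝ (Tmap A z) (Tmap A z) := by
    rw [← adjT, TTt A hA]
  have hzq : (inner ℝ z (Ttmap A (Tmap A z)) : ℝ) = inner ℝ (Tmap A z) (Tmap A z) := by
    rw [← adjT]
  have hc : (inner ℝ (Ttmap A (Tmap A z)) z : ℝ) = inner ℝ z (Ttmap A (Tmap A z)) :=
    real_inner_comm _ _
  simp only [inner_sub_left, inner_sub_right]
  linarith [hq, hzq, hc]

lemma Snn (hA : ∀ n, (A n)ᵀ * A n = 1) (x : EuclideanSpace ℝ (∀ n, Fin (m n))) :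
    0 ≤ (inner ℝ x (Smap A Ω x) : ℝ) := by
  rw [Su_eq, ← adjP, inner_z_sub_Q A hA]
  exact real_inner_self_nonneg

lemma Snorm (hA : ∀ n, (A n)ᵀ * A n = 1) (x : EuclideanSpace ℝ (∀ n, Fin (m n))) :
    ‖Smap A Ω x‖ ≤ ‖x‖ := by
  rw [Su_eq]
  refine le_trans (Pnorm _ _) (le_trans ?_ (Pnorm Ω x))
  set z := Pmap Ω x
  have h2 : ‖z - Ttmap A (Tmap A z)‖ ^ 2 ≤ ‖z‖ ^ 2 := by
    rw [← real_inner_self_eq_norm_sq, ← real_inner_self_eq_norm_sq]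
    rw [← inner_z_sub_Q A hA, inner_sub_right]
    have : (0:ℝ) ≤ inner ℝ z (Ttmap A (Tmap A z)) := by
      rw [← adjT]
      exact real_inner_self_nonneg
    linarith
  nlinarith [norm_nonneg (z - Ttmap A (Tmap A z)), norm_nonneg z]

lemma hasGrad (M : (∀ n, Fin (m n)) → ℝ) (X : EuclideanSpace ℝ (∀ n, Fin (m n))) :
    HasGradientAt (hfun A Ω M) (Smap A Ω X - bvec A Ω M) X := by
  have hfe : hfun A Ω M = fun Y => 1 / 2 * (inner ℝ Y (Smap A Ω Y) : ℝ)
      - inner ℝ (bvec A Ω M) Y - 1 / 2 * (inner ℝ (cvec A Ω M) (cvec A Ω M) : ℝ) :=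
    funext (hrep A Ω M)
  rw [hfe, hasGradientAt_iff_hasFDerivAt]
  have h1 : HasFDerivAt (fun Y : EuclideanSpace ℝ (∀ n, Fin (m n)) =>
      (inner ℝ Y (Smap A Ω Y) : ℝ))
      ((fderivInnerCLM ℝ (X, Smap A Ω X)).comp
        ((ContinuousLinearMap.id ℝ _).prod (Smap A Ω))) X :=
    (hasFDerivAt_id X).inner ℝ ((Smap A Ω).hasFDerivAt)
  have h2 : HasFDerivAt (fun Y : EuclideanSpace ℝ (∀ n, Fin (m n)) =>
      (inner ℝ (bvec A Ω M) Y : ℝ)) (innerSL ℝ (bvec A Ω M)) X :=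
    (innerSL ℝ (bvec A Ω M)).hasFDerivAt
  have h3 := ((h1.const_mul (1/2)).sub h2).sub_const
    (1 / 2 * (inner ℝ (cvec A Ω M) (cvec A Ω M) : ℝ))
  refine h3.congr_fderiv ?_
  ext v
  simp only [InnerProductSpace.toDual_apply_apply, ContinuousLinearMap.sub_apply,
    ContinuousLinearMap.smul_apply, ContinuousLinearMap.comp_apply,
    ContinuousLinearMap.prod_apply, ContinuousLinearMap.id_apply,
    fderivInnerCLM_apply, innerSL_apply_apply, smul_eq_mul]
  rw [inner_sub_left]
  have hs : (inner ℝ v (Smap A Ω X) : ℝ) = inner ℝ (Smap A Ω X) v := real_inner_comm _ _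
  have hs2 : (inner ℝ X (Smap A Ω v) : ℝ) = inner ℝ (Smap A Ω X) v := by
    rw [← selfadjS, real_inner_comm]
  rw [hs, hs2]  -- careful direction
  ring


end Aux

/-- If every `A n` has orthonormal columns, then `h` is convex and its gradient is
`1`-Lipschitz. -/
theorem stmt_8 {N : ℕ} {m r : Fin N → ℕ}
    (A : ∀ n, Matrix (Fin (m n)) (Fin (r n)) ℝ)
    (hA : ∀ n, (A n)ᵀ * A n = 1)
    (Ω : Set (∀ n, Fin (m n))) [DecidablePred (· ∈ Ω)]
    (M : (∀ n, Fin (m n)) → ℝ) :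
    ConvexOn ℝ Set.univ (hfun A Ω M) ∧
      ∀ X Y : EuclideanSpace ℝ (∀ n, Fin (m n)),
        ‖gradient (hfun A Ω M) X - gradient (hfun A Ω M) Y‖ ≤ ‖X - Y‖ := by
  have gradeq : ∀ X, gradient (hfun A Ω M) X = Smap A Ω X - bvec A Ω M :=
    fun X => (hasGrad A Ω M X).gradient
  constructor
  · refine ⟨convex_univ, ?_⟩
    intro x _ y _ a b ha hb hab
    have hb' : b = 1 - a := by linarith
    subst hb'
    simp only [smul_eq_mul, hrep]
    have e1 : (inner ℝ (a • x + (1 - a) • y) (Smap A Ω (a • x + (1 - a) • y)) : ℝ)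
        = a * a * inner ℝ x (Smap A Ω x) + a * (1 - a) * inner ℝ x (Smap A Ω y)
          + (1 - a) * a * inner ℝ y (Smap A Ω x)
          + (1 - a) * (1 - a) * inner ℝ y (Smap A Ω y) := by
      simp only [map_add, _root_.map_smul, inner_add_left, inner_add_right,
        real_inner_smul_left, real_inner_smul_right]
      ring
    have e2 : (inner ℝ (bvec A Ω M) (a • x + (1 - a) • y) : ℝ)
        = a * inner ℝ (bvec A Ω M) x + (1 - a) * inner ℝ (bvec A Ω M) y := by
      simp only [inner_add_right, real_inner_smul_right]
    have e3 : (0 : ℝ) ≤ inner ℝ (x - y) (Smap A Ω (x - y)) := Snn A Ω hA _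
    have e4 : (inner ℝ (x - y) (Smap A Ω (x - y)) : ℝ)
        = inner ℝ x (Smap A Ω x) - inner ℝ x (Smap A Ω y) - inner ℝ y (Smap A Ω x)
          + inner ℝ y (Smap A Ω y) := by
      simp only [map_sub, inner_sub_left, inner_sub_right]
      ring
    rw [e4] at e3
    have key : 0 ≤ a * (1 - a) * (inner ℝ x (Smap A Ω x) - inner ℝ x (Smap A Ω y)
        - inner ℝ y (Smap A Ω x) + inner ℝ y (Smap A Ω y)) :=
      mul_nonneg (mul_nonneg ha hb) e3
    rw [e1, e2]
    nlinarith [key]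
  · intro X Y
    rw [gradeq, gradeq]
    have hd : Smap A Ω X - bvec A Ω M - (Smap A Ω Y - bvec A Ω M)
        = Smap A Ω (X - Y) := by
      rw [map_sub]
      abel
    rw [hd]
    exact Snorm A Ω hA _
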